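/- Let X be a metric space, A ⊂ X, S a set, and δ, r, ε > 0. Suppose: f : A → Δ(S) is a (δ,δ)-Lipschitz partition of unity; g : X → Δ(S) is a (δ,δ)-Lipschitz partition of unity; p : X → A is a retraction such that d(x, p(x)) < dist(x, A) + 1 for all x ∈ X; α : X → [0,1] is (1/r)-Lipschitz with α(A) ⊂ {0} and α(X ∖ B(A,r)) ⊂ {1}, where B(A,r) = {x ∈ X : dist(x,A) < r}; and h : X → Δ(S) is defined by h(x) = α(x)·g(x) + (1 − α(x))·f(p(x)). If r ≥ 4/ε, δ ≤ ε/3 − 2/(3r), and δ ≤ ε/(4r+7), then h is an (ε,ε)-Lipschitz partition of unity extending f. -/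

import Mathlib

/-- The `l¹` distance between two (finitely supported) functions `S → ℝ`,
modeling the metric of `Δ(S) ⊆ l¹(S)`. -/
noncomputable def l1dist {S : Type*} (φ ψ : S → ℝ) : ℝ := ∑ᶠ v, |φ v - ψ v|

/-- `φ` is a point of `Δ(S)`. -/
def IsDelta {S : Type*} (φ : S → ℝ) : Prop :=
  (∀ v, 0 ≤ φ v) ∧ (Function.support φ).Finite ∧ ∑ᶠ v, φ v = 1

/-- `f` is `(ε,ε)`-Lipschitz on `A` (with respect to the `l¹` metric on `Δ(S)`). -/
def LipschitzEpsOn {X S : Type*} [MetricSpace X] (ε : ℝ) (f : X → S → ℝ) (A : Set X) : Prop :=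
  ∀ x ∈ A, ∀ y ∈ A, l1dist (f x) (f y) ≤ ε * dist x y + ε

lemma l1dist_comm' {S : Type*} (φ ψ : S → ℝ) : l1dist φ ψ = l1dist ψ φ := by
  unfold l1dist
  simp only [abs_sub_comm]

lemma l1dist_eq_sum {S : Type*} (φ ψ : S → ℝ) (T : Finset S)
    (hφ : Function.support φ ⊆ T) (hψ : Function.support ψ ⊆ T) :
    l1dist φ ψ = ∑ v ∈ T, |φ v - ψ v| := by
  apply finsum_eq_sum_of_support_subset
  intro v hv
  rcases Classical.em (φ v = 0) with h1 | h1
  · rcases Classical.em (ψ v = 0) with h2 | h2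
    · exact absurd (by simp [h1, h2]) hv
    · exact hψ h2
  · exact hφ h1

set_option maxHeartbeats 2000000 in
/-- Lemma 4.1, Lipschitz part. Given a `(δ,δ)`-Lipschitz partition of
unity `f` on `A ⊆ X`, a `(δ,δ)`-Lipschitz partition of unity `g` on `X`, a retraction
`p : X → A` with `d(x,p(x)) < dist(x,A) + 1`, a `(1/r)`-Lipschitz `α : X → [0,1]` vanishing
on `A` and equal to `1` off `B(A,r)`, and `h(x) = α(x)·g(x) + (1-α(x))·f(p(x))`: if
`r ≥ 4/ε`, `δ ≤ ε/3 - 2/(3r)` and `δ ≤ ε/(4r+7)`, then `h` is an `(ε,ε)`-Lipschitz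
partition of unity extending `f`. -/
theorem stmt5 {X S : Type*} [MetricSpace X] (A : Set X) (δ r ε : ℝ)
    (hδ : 0 < δ) (hr : 0 < r) (hε : 0 < ε)
    (f g : X → S → ℝ) (p : X → X) (α : X → ℝ)
    (hfA : ∀ a ∈ A, IsDelta (f a)) (hflip : LipschitzEpsOn δ f A)
    (hgX : ∀ x : X, IsDelta (g x)) (hglip : LipschitzEpsOn δ g Set.univ)
    (hpA : ∀ x : X, p x ∈ A) (hpretr : ∀ a ∈ A, p a = a)
    (hpdist : ∀ x : X, dist x (p x) < Metric.infDist x A + 1)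
    (hα01 : ∀ x : X, α x ∈ Set.Icc (0:ℝ) 1)
    (hαlip : ∀ x y : X, |α x - α y| ≤ (1 / r) * dist x y)
    (hαA : ∀ a ∈ A, α a = 0)
    (hαout : ∀ x : X, x ∉ Metric.thickening r A → α x = 1)
    (h : X → S → ℝ)
    (hdef : ∀ x v, h x v = α x * g x v + (1 - α x) * f (p x) v)
    (hr4 : 4 / ε ≤ r) (hδ1 : δ ≤ ε / 3 - 2 / (3 * r)) (hδ2 : δ ≤ ε / (4 * r + 7)) :
    (∀ a ∈ A, h a = f a) ∧ (∀ x : X, IsDelta (h x)) ∧ LipschitzEpsOn ε h Set.univ := by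
  classical
  have hP2 : δ * (4 * r + 7) ≤ ε := by
    have := (le_div_iff₀ (by linarith : (0:ℝ) < 4 * r + 7)).mp hδ2
    linarith
  have hδε : δ ≤ ε := by nlinarith
  have hP3 : 4 ≤ ε * r := by
    rw [div_le_iff₀ hε] at hr4; linarith
  have hP1 : 3 * r * δ ≤ ε * r - 2 := by
    have h3r : (0:ℝ) < 3 * r := by linarith
    have h2' : 2 / (3 * r) ≤ ε / 3 - δ := by linarith
    rw [div_le_iff₀ h3r] at h2'
    nlinarith
  refine ⟨?_, ?_, ?_⟩
  · -- h = f on A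
    intro a ha
    funext v
    rw [hdef, hαA a ha, hpretr a ha]
    ring
  · -- IsDelta (h x)
    intro x
    obtain ⟨hg0, hgfin, hgsum⟩ := hgX x
    obtain ⟨hf0, hffin, hfsum⟩ := hfA (p x) (hpA x)
    obtain ⟨ha0, ha1⟩ := hα01 x
    have hsupp : Function.support (h x) ⊆ ↑(hgfin.toFinset ∪ hffin.toFinset) := by
      intro v hv
      simp only [Finset.coe_union, Set.mem_union, Set.Finite.coe_toFinset]
      by_contra hc
      push_neg at hc
      have h1 : g x v = 0 := by
        by_contra h'; exact hc.1 h'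
      have h2 : f (p x) v = 0 := by
        by_contra h'; exact hc.2 h'
      exact hv (by rw [hdef, h1, h2]; ring)
    refine ⟨?_, ?_, ?_⟩
    · intro v
      rw [hdef]
      have h1 := hg0 v; have h2 := hf0 v
      nlinarith
    · exact Set.Finite.subset (Finset.finite_toSet _) hsupp
    · set T := hgfin.toFinset ∪ hffin.toFinset with hT
      have e1 : ∑ᶠ v, h x v = ∑ v ∈ T, h x v :=
        finsum_eq_sum_of_support_subset _ hsupp
      have e2 : ∑ᶠ v, g x v = ∑ v ∈ T, g x v := by
        apply finsum_eq_sum_of_support_subset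
        intro v hv
        simp only [T, Finset.coe_union, Set.mem_union, Set.Finite.coe_toFinset]
        exact Or.inl hv
      have e3 : ∑ᶠ v, f (p x) v = ∑ v ∈ T, f (p x) v := by
        apply finsum_eq_sum_of_support_subset
        intro v hv
        simp only [T, Finset.coe_union, Set.mem_union, Set.Finite.coe_toFinset]
        exact Or.inr hv
      rw [e1]
      have : ∑ v ∈ T, h x v = α x * (∑ v ∈ T, g x v) + (1 - α x) * (∑ v ∈ T, f (p x) v) := by
        rw [Finset.mul_sum, Finset.mul_sum, ← Finset.sum_add_distrib]
        exact Finset.sum_congr rfl fun v _ => hdef x v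
      rw [this, ← e2, ← e3, hgsum, hfsum]
      ring
  · -- Lipschitz
    have key : ∀ x y : X, x ∈ Metric.thickening r A →
        l1dist (h x) (h y) ≤ ε * dist x y + ε := by
      intro x y hx
      obtain ⟨hgx0, hgxfin, hgxsum⟩ := hgX x
      obtain ⟨hgy0, hgyfin, hgysum⟩ := hgX y
      obtain ⟨hfx0, hfxfin, hfxsum⟩ := hfA (p x) (hpA x)
      obtain ⟨hfy0, hfyfin, hfysum⟩ := hfA (p y) (hpA y)
      obtain ⟨ha0, ha1⟩ := hα01 x
      obtain ⟨hb0, hb1⟩ := hα01 y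
      set d := dist x y with hd
      have hd0 : 0 ≤ d := dist_nonneg
      set T := (hgxfin.toFinset ∪ hgyfin.toFinset) ∪ (hfxfin.toFinset ∪ hfyfin.toFinset)
        with hT
      have hTgx : Function.support (g x) ⊆ ↑T := by
        intro v hv; simp only [T, Finset.coe_union, Set.mem_union, Set.Finite.coe_toFinset]
        tauto
      have hTgy : Function.support (g y) ⊆ ↑T := by
        intro v hv; simp only [T, Finset.coe_union, Set.mem_union, Set.Finite.coe_toFinset]
        tauto
      have hTfx : Function.support (f (p x)) ⊆ ↑T := by
        intro v hv; simp only [T, Finset.coe_union, Set.mem_union, Set.Finite.coe_toFinset]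
        tauto
      have hTfy : Function.support (f (p y)) ⊆ ↑T := by
        intro v hv; simp only [T, Finset.coe_union, Set.mem_union, Set.Finite.coe_toFinset]
        tauto
      have hThx : Function.support (h x) ⊆ ↑T := by
        intro v hv
        rcases Classical.em (g x v = 0) with h1 | h1
        · rcases Classical.em (f (p x) v = 0) with h2 | h2
          · exact absurd (by rw [hdef, h1, h2]; ring) hv
          · exact hTfx h2
        · exact hTgx h1
      have hThy : Function.support (h y) ⊆ ↑T := by
        intro v hv
        rcases Classical.em (g y v = 0) with h1 | h1
        · rcases Classical.em (f (p y) v = 0) with h2 | h2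
          · exact absurd (by rw [hdef, h1, h2]; ring) hv
          · exact hTfy h2
        · exact hTgy h1
      rw [l1dist_eq_sum _ _ T hThx hThy]
      -- pointwise bound
      have hpt : ∀ v ∈ T, |h x v - h y v| ≤
          α x * |g x v - g y v| + (1 - α x) * |f (p x) v - f (p y) v|
            + |α x - α y| * |g y v - f (p y) v| := by
        intro v _
        rw [hdef, hdef]
        have heq : α x * g x v + (1 - α x) * f (p x) v
            - (α y * g y v + (1 - α y) * f (p y) v)
            = α x * (g x v - g y v) + (1 - α x) * (f (p x) v - f (p y) v)
              + (α x - α y) * (g y v - f (p y) v) := by ring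
        rw [heq]
        calc |α x * (g x v - g y v) + (1 - α x) * (f (p x) v - f (p y) v)
              + (α x - α y) * (g y v - f (p y) v)|
            ≤ |α x * (g x v - g y v) + (1 - α x) * (f (p x) v - f (p y) v)|
              + |(α x - α y) * (g y v - f (p y) v)| := abs_add_le _ _
          _ ≤ |α x * (g x v - g y v)| + |(1 - α x) * (f (p x) v - f (p y) v)|
              + |(α x - α y) * (g y v - f (p y) v)| := by
                have := abs_add_le (α x * (g x v - g y v))
                  ((1 - α x) * (f (p x) v - f (p y) v))
                linarith
          _ = α x * |g x v - g y v| + (1 - α x) * |f (p x) v - f (p y) v|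
              + |α x - α y| * |g y v - f (p y) v| := by
                rw [abs_mul, abs_mul, abs_mul, abs_of_nonneg ha0,
                  abs_of_nonneg (by linarith : (0:ℝ) ≤ 1 - α x)]
      have hsum : ∑ v ∈ T, |h x v - h y v| ≤
          α x * (∑ v ∈ T, |g x v - g y v|)
          + (1 - α x) * (∑ v ∈ T, |f (p x) v - f (p y) v|)
          + |α x - α y| * (∑ v ∈ T, |g y v - f (p y) v|) := by
        calc ∑ v ∈ T, |h x v - h y v|
            ≤ ∑ v ∈ T, (α x * |g x v - g y v| + (1 - α x) * |f (p x) v - f (p y) v|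
              + |α x - α y| * |g y v - f (p y) v|) := Finset.sum_le_sum hpt
          _ = _ := by
              rw [Finset.sum_add_distrib, Finset.sum_add_distrib,
                ← Finset.mul_sum, ← Finset.mul_sum, ← Finset.mul_sum]
      -- bounds on each sum
      have hG : ∑ v ∈ T, |g x v - g y v| ≤ δ * d + δ := by
        rw [← l1dist_eq_sum _ _ T hTgx hTgy]
        exact hglip x (Set.mem_univ x) y (Set.mem_univ y)
      have hinfx : Metric.infDist x A < r := by
        rw [Metric.mem_thickening_iff_infDist_lt ⟨p x, hpA x⟩] at hx
        exact hx
      have hinfy : Metric.infDist y A ≤ Metric.infDist x A + d := by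
        rw [hd, dist_comm]; exact Metric.infDist_le_infDist_add_dist
      have hpxy : dist (p x) (p y) ≤ 2 * d + 2 * r + 2 := by
        have h1 := hpdist x
        have h2 := hpdist y
        calc dist (p x) (p y) ≤ dist (p x) x + dist x (p y) := dist_triangle _ _ _
          _ ≤ dist (p x) x + (dist x y + dist y (p y)) :=
              add_le_add le_rfl (dist_triangle _ _ _)
          _ = dist x (p x) + d + dist y (p y) := by rw [dist_comm (p x) x]; ring
          _ ≤ 2 * d + 2 * r + 2 := by linarith
      have hF : ∑ v ∈ T, |f (p x) v - f (p y) v| ≤ δ * (2 * d + 2 * r + 2) + δ := by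
        rw [← l1dist_eq_sum _ _ T hTfx hTfy]
        have := hflip (p x) (hpA x) (p y) (hpA y)
        have h2 : δ * dist (p x) (p y) ≤ δ * (2 * d + 2 * r + 2) :=
          mul_le_mul_of_nonneg_left hpxy hδ.le
        linarith
      have hGF : ∑ v ∈ T, |g y v - f (p y) v| ≤ 2 := by
        have hb : ∀ v ∈ T, |g y v - f (p y) v| ≤ g y v + f (p y) v := by
          intro v _
          have := abs_sub (g y v) (f (p y) v)
          rw [abs_of_nonneg (hgy0 v), abs_of_nonneg (hfy0 v)] at this
          exact this
        calc ∑ v ∈ T, |g y v - f (p y) v| ≤ ∑ v ∈ T, (g y v + f (p y) v) :=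
              Finset.sum_le_sum hb
          _ = (∑ v ∈ T, g y v) + (∑ v ∈ T, f (p y) v) := Finset.sum_add_distrib
          _ = 2 := by
              rw [← finsum_eq_sum_of_support_subset _ hTgy,
                ← finsum_eq_sum_of_support_subset _ hTfy, hgysum, hfysum]
              norm_num
      -- |α x - α y| bounds
      set t := |α x - α y| with ht
      have ht0 : 0 ≤ t := abs_nonneg _
      have ht1 : t ≤ 1 := by
        rw [abs_sub_le_iff]; constructor <;> linarith
      have htr : t * r ≤ d := by
        have := hαlip x y
        rw [div_mul_eq_mul_div, one_mul, ← hd] at this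
        calc t * r ≤ (d / r) * r := mul_le_mul_of_nonneg_right this hr.le
          _ = d := by field_simp
      -- combine
      have hGle : δ * d + δ ≤ δ * (2 * d + 2 * r + 2) + δ := by nlinarith
      have hcomb : α x * (∑ v ∈ T, |g x v - g y v|)
          + (1 - α x) * (∑ v ∈ T, |f (p x) v - f (p y) v|)
          + t * (∑ v ∈ T, |g y v - f (p y) v|)
          ≤ (δ * (2 * d + 2 * r + 2) + δ) + 2 * t := by
        have s1 : α x * (∑ v ∈ T, |g x v - g y v|) ≤ α x * (δ * (2 * d + 2 * r + 2) + δ) :=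
          mul_le_mul_of_nonneg_left (hG.trans hGle) ha0
        have s2 : (1 - α x) * (∑ v ∈ T, |f (p x) v - f (p y) v|)
            ≤ (1 - α x) * (δ * (2 * d + 2 * r + 2) + δ) :=
          mul_le_mul_of_nonneg_left hF (by linarith)
        have s3 : t * (∑ v ∈ T, |g y v - f (p y) v|) ≤ t * 2 :=
          mul_le_mul_of_nonneg_left hGF ht0
        calc α x * (∑ v ∈ T, |g x v - g y v|)
            + (1 - α x) * (∑ v ∈ T, |f (p x) v - f (p y) v|)
            + t * (∑ v ∈ T, |g y v - f (p y) v|)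
            ≤ α x * (δ * (2 * d + 2 * r + 2) + δ)
              + (1 - α x) * (δ * (2 * d + 2 * r + 2) + δ) + t * 2 := by linarith
          _ = (δ * (2 * d + 2 * r + 2) + δ) + 2 * t := by ring
      have hδr0 : 0 ≤ δ * r := by positivity
      have harith : (δ * (2 * d + 2 * r + 2) + δ) + 2 * t ≤ ε * d + ε := by
        rcases le_or_gt d r with hc | hc
        · -- d ≤ r, use t * r ≤ d
          have k1 : 4 * t ≤ ε * (t * r) := by nlinarith
          have k2 : ε * (t * r) ≤ ε * d := mul_le_mul_of_nonneg_left htr hε.le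
          have k3' : 4 * δ ≤ ε := by nlinarith
          have k3 : 4 * δ * d ≤ ε * d := mul_le_mul_of_nonneg_right k3' hd0
          have k6 : δ * d ≤ δ * r := mul_le_mul_of_nonneg_left hc hδ.le
          linarith
        · -- r < d, use t ≤ 1
          have m1 : 3 * r * δ * d ≤ (ε * r - 2) * d := mul_le_mul_of_nonneg_right hP1 hd0
          have k5 : 3 * δ * d + 2 ≤ ε * d := by
            have hrd : 2 * r ≤ 2 * d := by linarith
            have : 0 ≤ r * (ε * d - 3 * δ * d - 2) := by nlinarith
            nlinarith
          have k6 : δ * r ≤ δ * d := mul_le_mul_of_nonneg_left hc.le hδ.le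
          linarith
      calc ∑ v ∈ T, |h x v - h y v| ≤ _ := hsum
        _ ≤ (δ * (2 * d + 2 * r + 2) + δ) + 2 * t := hcomb
        _ ≤ ε * d + ε := harith
    intro x _ y _
    by_cases hx : x ∈ Metric.thickening r A
    · exact key x y hx
    · by_cases hy : y ∈ Metric.thickening r A
      · rw [l1dist_comm', dist_comm]
        exact key y x hy
      · -- both outside: h = g
        have ex : ∀ v, h x v = g x v := by
          intro v; rw [hdef, hαout x hx]; ring
        have ey : ∀ v, h y v = g y v := by
          intro v; rw [hdef, hαout y hy]; ring
        have : l1dist (h x) (h y) = l1dist (g x) (g y) := by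
          unfold l1dist
          exact finsum_congr fun v => by rw [ex v, ey v]
        rw [this]
        have := hglip x (Set.mem_univ x) y (Set.mem_univ y)
        have hd0 : (0:ℝ) ≤ dist x y := dist_nonneg
        nlinarith [mul_le_mul_of_nonneg_right hδε hd0]
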